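/- Let σ ∈ {+1,−1}, let N₁,N₂,N₃,N₄ ∈ ℝ⁴ be linearly independent, and let V₁,V₂,V₃,V₄ ∈ ℝ⁴ satisfy ⟪V_i,V_i⟫ = σ and ⟪V_i,N_j⟫ = 0 for all j ≠ i. For each i define χ̃_i := (−1)^{i−1} σ · det(V_i | N_j | N_k | N_l), where j < k < l are the three indices other than i. Then for every i one has ⟪V_i,N_i⟫ ≠ 0, χ̃_i ≠ 0, and det(N₁ | N₂ | N₃ | N₄) = ⟪V_i,N_i⟫ · χ̃_i. Consequently, the four numbers ⟪V₁,N₁⟫,…,⟪V₄,N₄⟫ all have the same sign if and only if the four numbers χ̃₁,…,χ̃₄ all have the same sign. -/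

import Mathlib

open Matrix

noncomputable section

/-- Ambient metric: `η_{+1} = diag(-1,1,1,1)`, `η_{-1} = diag(-1,-1,1,1)`. -/
def eta (σ : ℝ) : Matrix (Fin 4) (Fin 4) ℝ := Matrix.diagonal ![-1, σ, 1, 1]

/-- Ambient bilinear form `⟪X,Y⟫ = Xᵀ η_σ Y`. -/
def ip (σ : ℝ) (X Y : Fin 4 → ℝ) : ℝ := X ⬝ᵥ (eta σ *ᵥ Y)

/-- The `4×4` matrix with the indicated columns. -/
def colMat (a b c d : Fin 4 → ℝ) : Matrix (Fin 4) (Fin 4) ℝ := (Matrix.of ![a, b, c, d])ᵀ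

/-- `χ̃_i := (-1)^{i-1} σ det(V_i | N_j | N_k | N_l)` with `j < k < l` the indices other than
`i` (in 0-based indexing the sign is `(-1)^i` and `j,k,l` are `i.succAbove 0,1,2`). -/
def chiTilde (σ : ℝ) (N V : Fin 4 → (Fin 4 → ℝ)) (i : Fin 4) : ℝ :=
  (-1 : ℝ) ^ (i : ℕ) * σ *
    (colMat (V i) (N (i.succAbove 0)) (N (i.succAbove 1)) (N (i.succAbove 2))).det

lemma row0 (x y b c d : Fin 4 → ℝ) :
    (Matrix.of ![x,b,c,d]).updateRow 0 y = Matrix.of ![y,b,c,d] := by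
  ext r s
  fin_cases r <;> simp [Matrix.updateRow_apply]

lemma det_colMat (a b c d : Fin 4 → ℝ) :
    (colMat a b c d).det = (Matrix.of ![a,b,c,d]).det := by
  rw [colMat, Matrix.det_transpose]

lemma det_first_sum (a : Fin 4 → ℝ) (Y : Fin 4 → (Fin 4 → ℝ)) (b c d : Fin 4 → ℝ) :
    (Matrix.of ![∑ m, a m • Y m, b, c, d]).det
      = ∑ m, a m * (Matrix.of ![Y m, b, c, d]).det := by
  rw [← row0 b (∑ m, a m • Y m) b c d, Fin.sum_univ_four, Fin.sum_univ_four]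
  simp only [Matrix.det_updateRow_add, Matrix.det_updateRow_smul, smul_eq_mul]
  rw [row0, row0, row0, row0]

lemma det_rowswap (p : Equiv.Perm (Fin 4)) (v : Fin 4 → Fin 4 → ℝ) :
    (Matrix.of (v ∘ p)).det = (Equiv.Perm.sign p : ℤ) * (Matrix.of v).det :=
  Matrix.det_permute p (Matrix.of v)

lemma ip_sum_right (σ : ℝ) (X : Fin 4 → ℝ) (a : Fin 4 → ℝ) (Y : Fin 4 → (Fin 4 → ℝ)) :
    ip σ X (∑ m, a m • Y m) = ∑ m, a m * ip σ X (Y m) := by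
  simp only [ip]
  rw [Fin.sum_univ_four, Fin.sum_univ_four]
  simp [Matrix.mulVec_add, Matrix.mulVec_smul, dotProduct_add, dotProduct_smul, smul_eq_mul]

lemma chi_eval (N : Fin 4 → (Fin 4 → ℝ)) (a : Fin 4 → ℝ) (i : Fin 4) :
    (colMat (∑ m, a m • N m) (N (i.succAbove 0)) (N (i.succAbove 1)) (N (i.succAbove 2))).det
      = (-1:ℝ)^(i:ℕ) * a i * (colMat (N 0) (N 1) (N 2) (N 3)).det := by
  rw [det_colMat, det_first_sum, det_colMat]
  have hrow : ∀ (x : Fin 4 → ℝ) (t : Fin 3),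
      (Matrix.of ![x, N (i.succAbove 0), N (i.succAbove 1), N (i.succAbove 2)]) t.succ
        = N (i.succAbove t) := by
    intro x t; fin_cases t <;> rfl
  have hzero : ∀ m, m ≠ i →
      (Matrix.of ![N m, N (i.succAbove 0), N (i.succAbove 1), N (i.succAbove 2)]).det = 0 := by
    intro m hm
    obtain ⟨t, ht⟩ := Fin.exists_succAbove_eq hm
    refine Matrix.det_zero_of_row_eq (i := 0) (j := t.succ) (Fin.succ_ne_zero t).symm ?_
    rw [hrow, ht]
    rfl
  rw [Finset.sum_eq_single i (fun m _ hm => by rw [hzero m hm, mul_zero])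
    (fun h => absurd (Finset.mem_univ i) h)]
  have hperm : ![N i, N (i.succAbove 0), N (i.succAbove 1), N (i.succAbove 2)]
      = (fun m => N m) ∘ (i.cycleRange.symm) := by
    funext r
    fin_cases r
    · show N i = N (i.cycleRange.symm 0)
      rw [Fin.cycleRange_symm_zero]
    · show N (i.succAbove 0) = N (i.cycleRange.symm (Fin.succ (0:Fin 3)))
      rw [Fin.cycleRange_symm_succ]
    · show N (i.succAbove 1) = N (i.cycleRange.symm (Fin.succ (1:Fin 3)))
      rw [Fin.cycleRange_symm_succ]
    · show N (i.succAbove 2) = N (i.cycleRange.symm (Fin.succ (2:Fin 3)))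
      rw [Fin.cycleRange_symm_succ]
  have hfun : (Matrix.of ![N 0, N 1, N 2, N 3]) = Matrix.of (fun m => N m) := by
    congr 1; funext r; fin_cases r <;> rfl
  rw [hperm, det_rowswap, Equiv.Perm.sign_symm, Fin.sign_cycleRange, hfun]
  push_cast
  ring

/-- If `N₁,…,N₄` are linearly independent and each `V_i` satisfies `⟪V_i,V_i⟫ = σ` and
`⟪V_i,N_j⟫ = 0` for `j ≠ i`, then each support number `⟪V_i,N_i⟫` and each `χ̃_i` is nonzero,
`det(N₁|N₂|N₃|N₄) = ⟪V_i,N_i⟫ χ̃_i` for every `i`, and the support numbers all have the same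
sign iff the `χ̃_i` all have the same sign. -/
theorem det_support_chi (σ : ℝ) (hσ : σ = 1 ∨ σ = -1) (N V : Fin 4 → (Fin 4 → ℝ))
    (hN : LinearIndependent ℝ N)
    (hVV : ∀ i, ip σ (V i) (V i) = σ)
    (hVN : ∀ i j, j ≠ i → ip σ (V i) (N j) = 0) :
    (∀ i, ip σ (V i) (N i) ≠ 0 ∧ chiTilde σ N V i ≠ 0 ∧
      (colMat (N 0) (N 1) (N 2) (N 3)).det = ip σ (V i) (N i) * chiTilde σ N V i) ∧
    (((∀ i, 0 < ip σ (V i) (N i)) ∨ (∀ i, ip σ (V i) (N i) < 0)) ↔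
      ((∀ i, 0 < chiTilde σ N V i) ∨ (∀ i, chiTilde σ N V i < 0))) := by
  have hσ0 : σ ≠ 0 := by rcases hσ with h | h <;> rw [h] <;> norm_num
  have hσ2 : σ * σ = 1 := by rcases hσ with h | h <;> rw [h] <;> norm_num
  -- determinant of the N-matrix is nonzero
  have hNmat : Matrix.of ![N 0, N 1, N 2, N 3] = Matrix.of (fun m => N m) := by
    congr 1; funext r; fin_cases r <;> rfl
  have hD : (colMat (N 0) (N 1) (N 2) (N 3)).det ≠ 0 := by
    rw [det_colMat, hNmat]
    have : IsUnit (Matrix.of (fun m => N m)) :=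
      Matrix.linearIndependent_rows_iff_isUnit.mp hN
    have := (Matrix.isUnit_iff_isUnit_det _).mp this
    exact this.ne_zero
  set D := (colMat (N 0) (N 1) (N 2) (N 3)).det with hDdef
  -- the basis given by the N's
  let b : Module.Basis (Fin 4) ℝ (Fin 4 → ℝ) :=
    basisOfLinearIndependentOfCardEqFinrank hN (by simp)
  have hb : ∀ m, b m = N m := fun m => by
    simp [b, coe_basisOfLinearIndependentOfCardEqFinrank]
  have key : ∀ i, ip σ (V i) (N i) ≠ 0 ∧ chiTilde σ N V i ≠ 0 ∧
      D = ip σ (V i) (N i) * chiTilde σ N V i := by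
    intro i
    set a : Fin 4 → ℝ := fun m => b.repr (V i) m with ha
    have hVi : V i = ∑ m, a m • N m := by
      conv_lhs => rw [← b.sum_repr (V i)]
      exact Finset.sum_congr rfl fun m _ => by rw [hb]
    have hsum : σ = a i * ip σ (V i) (N i) := by
      conv_lhs => rw [← hVV i]
      conv_lhs => rw [show ip σ (V i) (V i) = ip σ (V i) (∑ m, a m • N m) by rw [← hVi]]
      rw [ip_sum_right, Finset.sum_eq_single i]
      · intro m _ hm
        rw [hVN i m hm, mul_zero]
      · intro h; exact absurd (Finset.mem_univ i) h
    have hc : ip σ (V i) (N i) ≠ 0 := by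
      intro h; rw [h, mul_zero] at hsum; exact hσ0 hsum
    have hai : a i ≠ 0 := by
      intro h; rw [h, zero_mul] at hsum; exact hσ0 hsum
    have hchi : chiTilde σ N V i = σ * (a i * D) := by
      rw [chiTilde, hVi, chi_eval, ← hDdef]
      have h4 : ((-1:ℝ)^(i:ℕ))^2 = 1 := by
        rw [← pow_mul, mul_comm, pow_mul]; norm_num
      calc (-1:ℝ)^(i:ℕ) * σ * ((-1:ℝ)^(i:ℕ) * a i * D)
          = ((-1:ℝ)^(i:ℕ))^2 * (σ * (a i * D)) := by ring
        _ = σ * (a i * D) := by rw [h4, one_mul]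
    refine ⟨hc, ?_, ?_⟩
    · rw [hchi]
      exact mul_ne_zero hσ0 (mul_ne_zero hai hD)
    · rw [hchi]
      have : ip σ (V i) (N i) * (σ * (a i * D)) = (a i * ip σ (V i) (N i)) * σ * D := by ring
      rw [this, ← hsum, hσ2, one_mul]
  refine ⟨key, ?_⟩
  rcases lt_or_gt_of_ne hD with hDn | hDp
  · -- D < 0 : signs are opposite
    have hpt1 : ∀ i, 0 < ip σ (V i) (N i) → chiTilde σ N V i < 0 := by
      intro i h
      obtain ⟨hc, hx, hE⟩ := key i
      rcases hx.lt_or_gt with h1 | h1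
      · exact h1
      · nlinarith [mul_pos h h1]
    have hpt2 : ∀ i, ip σ (V i) (N i) < 0 → 0 < chiTilde σ N V i := by
      intro i h
      obtain ⟨hc, hx, hE⟩ := key i
      rcases hx.lt_or_gt with h1 | h1
      · nlinarith [mul_pos_of_neg_of_neg h h1]
      · exact h1
    have hpt3 : ∀ i, 0 < chiTilde σ N V i → ip σ (V i) (N i) < 0 := by
      intro i h
      obtain ⟨hc, hx, hE⟩ := key i
      rcases hc.lt_or_gt with h1 | h1
      · exact h1
      · nlinarith [mul_pos h1 h]
    have hpt4 : ∀ i, chiTilde σ N V i < 0 → 0 < ip σ (V i) (N i) := by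
      intro i h
      obtain ⟨hc, hx, hE⟩ := key i
      rcases hc.lt_or_gt with h1 | h1
      · nlinarith [mul_pos_of_neg_of_neg h1 h]
      · exact h1
    constructor
    · rintro (h | h)
      · right; exact fun i => hpt1 i (h i)
      · left; exact fun i => hpt2 i (h i)
    · rintro (h | h)
      · right; exact fun i => hpt3 i (h i)
      · left; exact fun i => hpt4 i (h i)
  · -- 0 < D : signs agree
    have hpt1 : ∀ i, 0 < ip σ (V i) (N i) → 0 < chiTilde σ N V i := by
      intro i h
      obtain ⟨hc, hx, hE⟩ := key i
      rcases hx.lt_or_gt with h1 | h1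
      · nlinarith [mul_pos h (neg_pos.mpr h1)]
      · exact h1
    have hpt2 : ∀ i, ip σ (V i) (N i) < 0 → chiTilde σ N V i < 0 := by
      intro i h
      obtain ⟨hc, hx, hE⟩ := key i
      rcases hx.lt_or_gt with h1 | h1
      · exact h1
      · nlinarith [mul_pos (neg_pos.mpr h) h1]
    have hpt3 : ∀ i, 0 < chiTilde σ N V i → 0 < ip σ (V i) (N i) := by
      intro i h
      obtain ⟨hc, hx, hE⟩ := key i
      rcases hc.lt_or_gt with h1 | h1
      · nlinarith [mul_pos (neg_pos.mpr h1) h]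
      · exact h1
    have hpt4 : ∀ i, chiTilde σ N V i < 0 → ip σ (V i) (N i) < 0 := by
      intro i h
      obtain ⟨hc, hx, hE⟩ := key i
      rcases hc.lt_or_gt with h1 | h1
      · exact h1
      · nlinarith [mul_pos h1 (neg_pos.mpr h)]
    constructor
    · rintro (h | h)
      · left; exact fun i => hpt1 i (h i)
      · right; exact fun i => hpt2 i (h i)
    · rintro (h | h)
      · left; exact fun i => hpt3 i (h i)
      · right; exact fun i => hpt4 i (h i)
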